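/- Suppose r ≥ 3 and α_1 = #P_1 ≥ 2. Fix vertices v ∈ P_1, u ∈ P_2 and u' ∈ P_3. Then the monomial t_{{u,u'}}^{q−2} · ∏_{w ∈ P_1∖{v}} t_{{w,u}}^{q−2}, which has total degree α_1(q−2), does not belong to the ideal I(X) + (t_{{v,u}}) of S. -/

import Mathlib

open MvPolynomial

/-- The value `x^e = x_i * x_j` of an unordered pair `e = {i,j}` of vertices. -/
noncomputable def edgeVal {V K : Type*} [CommMonoid K] (x : V → K) (e : Sym2 V) : K :=
  Sym2.lift ⟨fun i j => x i * x j, fun i j => mul_comm _ _⟩ e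

/-- The vanishing ideal `I(X)` of the algebraic toric set `X` parameterized by the
edges of the graph `G`: the ideal generated by all homogeneous polynomials vanishing
on all points `(x^{e_1}, …, x^{e_s})` with `x ∈ (K*)^n`. -/
noncomputable def vanishingIdeal (K : Type*) [Field K] {V : Type*} (G : SimpleGraph V) :
    Ideal (MvPolynomial G.edgeSet K) :=
  Ideal.span {f | (∃ d, f.IsHomogeneous d) ∧
    ∀ x : V → Kˣ,
      MvPolynomial.eval (fun e : G.edgeSet => edgeVal (fun v => (x v : K)) (e : Sym2 V)) f = 0}

namespace Statement9Aux

open Finset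

variable {V K : Type*} [Fintype V] [DecidableEq V] [Field K] [Fintype K] [DecidableEq K]
variable (G : SimpleGraph V) [Fintype G.edgeSet]

/-- vertex degree of an exponent vector -/
noncomputable def Dg (b : G.edgeSet →₀ ℕ) (w : V) : ℕ :=
  ∑ e : G.edgeSet, b e * (if w ∈ (e : Sym2 V) then 1 else 0)

lemma Dg_add (b₁ b₂ : G.edgeSet →₀ ℕ) (w : V) :
    Dg G (b₁ + b₂) w = Dg G b₁ w + Dg G b₂ w := by
  rw [Dg, Dg, Dg, ← Finset.sum_add_distrib]
  exact Finset.sum_congr rfl fun e _ => by rw [Finsupp.add_apply, add_mul]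

lemma Dg_single (e : G.edgeSet) (k : ℕ) (w : V) :
    Dg G (Finsupp.single e k) w = if w ∈ (e : Sym2 V) then k else 0 := by
  classical
  rw [Dg]
  rw [Finset.sum_eq_single e]
  · rw [Finsupp.single_eq_same]
    by_cases hw : w ∈ (e : Sym2 V) <;> simp [hw]
  · intro e' _ hne
    rw [Finsupp.single_eq_of_ne' (Ne.symm hne), zero_mul]
  · intro h; exact absurd (Finset.mem_univ e) h

lemma Dg_sum {ι : Type*} (s : Finset ι) (g : ι → (G.edgeSet →₀ ℕ)) (w : V) :
    Dg G (∑ i ∈ s, g i) w = ∑ i ∈ s, Dg G (g i) w := by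
  classical
  induction s using Finset.cons_induction with
  | empty => simp [Dg]
  | cons i s hi ih => rw [Finset.sum_cons, Dg_add, ih, Finset.sum_cons]

lemma le_Dg (b : G.edgeSet →₀ ℕ) (e : G.edgeSet) (w : V) (hw : w ∈ (e : Sym2 V)) :
    b e ≤ Dg G b w := by
  calc b e = b e * (if w ∈ (e : Sym2 V) then 1 else 0) := by rw [if_pos hw, mul_one]
    _ ≤ Dg G b w := Finset.single_le_sum
        (f := fun e' : G.edgeSet => b e' * (if w ∈ (e' : Sym2 V) then 1 else 0))
        (fun _ _ => Nat.zero_le _) (Finset.mem_univ e)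

lemma degree_eq (b : G.edgeSet →₀ ℕ) : b.degree = ∑ e : G.edgeSet, b e := by
  rw [Finsupp.degree]
  exact Finset.sum_subset (Finset.subset_univ _)
    (fun e _ he => Finsupp.notMem_support_iff.mp he)

lemma edgeVal_pow (x : V → K) (e : G.edgeSet) (k : ℕ) :
    edgeVal x (e : Sym2 V) ^ k = ∏ w : V, x w ^ (k * if w ∈ (e : Sym2 V) then 1 else 0) := by
  classical
  obtain ⟨e, he⟩ := e
  induction e with
  | _ i j =>
    have hij : i ≠ j := (G.mem_edgeSet.mp he).ne
    have h1 : edgeVal x (s(i, j) : Sym2 V) = x i * x j := rfl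
    have h2 : ∀ w : V, x w ^ (k * if w ∈ (s(i,j) : Sym2 V) then 1 else 0)
        = if w = i ∨ w = j then x w ^ k else 1 := by
      intro w
      by_cases hw : w = i ∨ w = j
      · rw [if_pos hw, if_pos (Sym2.mem_iff.mpr hw), mul_one]
      · rw [if_neg hw, if_neg (fun h => hw (Sym2.mem_iff.mp h)), mul_zero, pow_zero]
    calc edgeVal x (s(i,j) : Sym2 V) ^ k = (x i * x j) ^ k := by rw [h1]
      _ = x i ^ k * x j ^ k := mul_pow _ _ _
      _ = ∏ w ∈ ({i, j} : Finset V), x w ^ k := (Finset.prod_pair (f := fun w => x w ^ k) hij).symm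
      _ = ∏ w ∈ Finset.univ.filter (fun w => w = i ∨ w = j), x w ^ k := by
            congr 1
            ext w
            simp
      _ = ∏ w : V, (if w = i ∨ w = j then x w ^ k else 1) := Finset.prod_filter _ _
      _ = ∏ w : V, x w ^ (k * if w ∈ (s(i,j) : Sym2 V) then 1 else 0) := by
            exact Finset.prod_congr rfl (fun w _ => (h2 w).symm)

lemma eval_monomial_eq (x : V → K) (b : G.edgeSet →₀ ℕ) (c : K) :
    MvPolynomial.eval (fun e : G.edgeSet => edgeVal x (e : Sym2 V)) (monomial b c)
      = c * ∏ w : V, x w ^ Dg G b w := by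
  classical
  rw [eval_monomial]
  congr 1
  rw [Finsupp.prod_fintype _ _ (fun e => pow_zero _)]
  calc ∏ e : G.edgeSet, edgeVal x (e : Sym2 V) ^ b e
      = ∏ e : G.edgeSet, ∏ w : V, x w ^ (b e * if w ∈ (e : Sym2 V) then 1 else 0) :=
        Finset.prod_congr rfl (fun e _ => edgeVal_pow G x e (b e))
    _ = ∏ w : V, ∏ e : G.edgeSet, x w ^ (b e * if w ∈ (e : Sym2 V) then 1 else 0) :=
        Finset.prod_comm
    _ = ∏ w : V, x w ^ Dg G b w := by
        refine Finset.prod_congr rfl (fun w _ => ?_)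
        rw [Dg, ← Finset.prod_pow_eq_pow_sum]

noncomputable def Lfun (a : V → ℕ) (d : ℕ) (f : MvPolynomial G.edgeSet K) : K :=
  ∑ x : V → Kˣ, (∏ w : V, (x w : K) ^ a w) *
    MvPolynomial.eval (fun e : G.edgeSet => edgeVal (fun w => ((x w : K))) (e : Sym2 V))
      (homogeneousComponent d f)

lemma Lfun_add (a : V → ℕ) (d : ℕ) (f g : MvPolynomial G.edgeSet K) :
    Lfun G a d (f + g) = Lfun G a d f + Lfun G a d g := by
  simp only [Lfun, map_add, mul_add]
  rw [Finset.sum_add_distrib]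

lemma Lfun_zero (a : V → ℕ) (d : ℕ) : Lfun G a d (0 : MvPolynomial G.edgeSet K) = 0 := by
  simp [Lfun]

lemma Lfun_sum {ι : Type*} (a : V → ℕ) (d : ℕ) (s : Finset ι)
    (f : ι → MvPolynomial G.edgeSet K) :
    Lfun G a d (∑ i ∈ s, f i) = ∑ i ∈ s, Lfun G a d (f i) := by
  classical
  induction s using Finset.cons_induction with
  | empty => simp [Lfun_zero]
  | cons i s hi ih => rw [Finset.sum_cons, Lfun_add, ih, Finset.sum_cons]

lemma sum_units_pow (k : ℕ) :
    (∑ t : Kˣ, (t : K) ^ k) = if (Fintype.card K - 1) ∣ k then (-1 : K) else 0 := by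
  classical
  rw [← FiniteField.sum_pow_units K k]

lemma Lfun_monomial (a : V → ℕ) (d : ℕ) (b : G.edgeSet →₀ ℕ) (c : K) :
    Lfun G a d (monomial b c) =
      if b.degree = d then c * ∏ w : V, (∑ t : Kˣ, (t : K) ^ (a w + Dg G b w)) else 0 := by
  classical
  have hhom : (monomial b c : MvPolynomial G.edgeSet K)
      ∈ homogeneousSubmodule G.edgeSet K b.degree :=
    (mem_homogeneousSubmodule _ _).mpr (isHomogeneous_monomial c rfl)
  rw [Lfun]
  by_cases hdeg : b.degree = d
  · rw [if_pos hdeg]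
    have : ∀ x : V → Kˣ,
        (∏ w : V, (x w : K) ^ a w) *
          MvPolynomial.eval (fun e : G.edgeSet => edgeVal (fun w => ((x w : K))) (e : Sym2 V))
            (homogeneousComponent d (monomial b c))
        = c * ∏ w : V, (x w : K) ^ (a w + Dg G b w) := by
      intro x
      rw [homogeneousComponent_of_mem hhom, if_pos hdeg.symm,
        eval_monomial_eq G (fun w => ((x w : K))) b c]
      rw [mul_left_comm, ← Finset.prod_mul_distrib]
      congr 1
      exact Finset.prod_congr rfl fun w _ => (pow_add _ _ _).symm
    rw [Finset.sum_congr rfl fun x _ => this x, ← Finset.mul_sum]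
    congr 1
    exact (Fintype.prod_sum (fun w (t : Kˣ) => ((t : K)) ^ (a w + Dg G b w))).symm
  · rw [if_neg hdeg]
    refine Finset.sum_eq_zero fun x _ => ?_
    rw [homogeneousComponent_of_mem hhom, if_neg (fun h => hdeg h.symm), map_zero, mul_zero]

lemma Lfun_mul_homogeneous (a : V → ℕ) (d : ℕ) {f : MvPolynomial G.edgeSet K} {n : ℕ}
    (hf : f.IsHomogeneous n)
    (hvan : ∀ x : V → Kˣ,
      MvPolynomial.eval (fun e : G.edgeSet => edgeVal (fun w => ((x w : K))) (e : Sym2 V)) f = 0)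
    (s : MvPolynomial G.edgeSet K) : Lfun G a d (s * f) = 0 := by
  classical
  conv_lhs => rw [s.as_sum, Finset.sum_mul]
  rw [Lfun_sum]
  refine Finset.sum_eq_zero fun b hb => ?_
  have hhom : (monomial b (coeff b s) * f) ∈ homogeneousSubmodule G.edgeSet K (b.degree + n) :=
    (mem_homogeneousSubmodule _ _).mpr ((isHomogeneous_monomial _ rfl).mul hf)
  rw [Lfun]
  refine Finset.sum_eq_zero fun x _ => ?_
  rw [homogeneousComponent_of_mem hhom]
  split_ifs with h
  · rw [map_mul, hvan x, mul_zero, mul_zero]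
  · rw [map_zero, mul_zero]

lemma prod_monomial_one {ι : Type*} (s : Finset ι) (gg : ι → (G.edgeSet →₀ ℕ)) :
    (∏ i ∈ s, monomial (gg i) (1 : K)) = monomial (∑ i ∈ s, gg i) 1 := by
  classical
  induction s using Finset.cons_induction with
  | empty => simp
  | cons i s hi ih => rw [Finset.prod_cons, Finset.sum_cons, ih, monomial_mul, one_mul]

lemma Lfun_vanishingIdeal (a : V → ℕ) (d : ℕ) {g : MvPolynomial G.edgeSet K}
    (hg : g ∈ vanishingIdeal K G) : Lfun G a d g = 0 := by
  have H : ∀ s : MvPolynomial G.edgeSet K, Lfun G a d (s * g) = 0 := by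
    refine Submodule.span_induction
      (p := fun g _ => ∀ s : MvPolynomial G.edgeSet K, Lfun G a d (s * g) = 0)
      ?_ ?_ ?_ ?_ hg
    · rintro f ⟨⟨n, hn⟩, hvan⟩ s
      exact Lfun_mul_homogeneous G a d hn hvan s
    · intro s; rw [mul_zero, Lfun_zero]
    · intro f g _ _ ihf ihg s
      rw [mul_add, Lfun_add, ihf, ihg, add_zero]
    · intro r f _ ih s
      rw [smul_eq_mul, ← mul_assoc]
      exact ih (s * r)
  have := H 1
  rwa [one_mul] at this

end Statement9Aux

open Statement9Aux

/-- (The degree `α_1(q-2)` monomial outside `I(X) + (t₁)`.)  Suppose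
`r ≥ 3` and the part `P_{i₁}` has at least `2` elements.  Fix `v ∈ P_{i₁}`, `u ∈ P_{i₂}`
and `u' ∈ P_{i₃}` (with `i₁, i₂, i₃` pairwise distinct).  Then the monomial
`t_{{u,u'}}^{q-2} · ∏_{w ∈ P_{i₁} ∖ {v}} t_{{w,u}}^{q-2}` does not belong to the ideal
`I(X) + (t_{{v,u}})`. -/
theorem statement9 {V ι K : Type*} [Fintype V] [DecidableEq V] [Fintype ι] [DecidableEq ι]
    [Field K] [Fintype K]
    (p : V → ι) (hp : Function.Surjective p) (hr : 3 ≤ Fintype.card ι)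
    (G : SimpleGraph V) (hAdj : ∀ x y, G.Adj x y ↔ p x ≠ p y)
    (i₁ i₂ i₃ : ι) (h12 : i₁ ≠ i₂) (h13 : i₁ ≠ i₃) (h23 : i₂ ≠ i₃)
    (hα : 2 ≤ (Finset.univ.filter fun w => p w = i₁).card)
    (v u u' : V) (hv : p v = i₁) (hu : p u = i₂) (hu' : p u' = i₃) :
    (X (⟨s(u, u'), G.mem_edgeSet.mpr ((hAdj u u').mpr (by rw [hu, hu']; exact h23))⟩ :
          G.edgeSet) ^ (Fintype.card K - 2) *
        ∏ w ∈ ((Finset.univ.filter fun w => p w = i₁).erase v).attach,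
          X (⟨s(w.1, u), G.mem_edgeSet.mpr ((hAdj w.1 u).mpr (by
              have hw := (Finset.mem_filter.mp (Finset.mem_of_mem_erase w.2)).2
              rw [hw, hu]; exact h12))⟩ : G.edgeSet) ^ (Fintype.card K - 2) :
        MvPolynomial G.edgeSet K) ∉
      vanishingIdeal K G ⊔ Ideal.span
        {X ⟨s(v, u), G.mem_edgeSet.mpr ((hAdj v u).mpr (by rw [hv, hu]; exact h12))⟩} := by
  classical
  haveI : Fintype G.edgeSet := Fintype.ofFinite _
  intro hmem
  obtain ⟨g, hg, h, hh, hsum⟩ := Submodule.mem_sup.mp hmem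
  -- notation
  set F : Finset V := Finset.univ.filter (fun w => p w = i₁) with hF
  set A' : Finset V := F.erase v with hA'
  set Q : ℕ := Fintype.card K - 2 with hQ
  have h2q : 2 ≤ Fintype.card K := Fintype.one_lt_card
  -- basic distinctness
  have hvu : v ≠ u := fun hh => h12 (by rw [← hv, hh, hu])
  have hvu' : v ≠ u' := fun hh => h13 (by rw [← hv, hh, hu'])
  have huu' : u ≠ u' := fun hh => h23 (by rw [← hu, hh, hu'])
  have hvF : v ∈ F := by rw [hF]; exact Finset.mem_filter.mpr ⟨Finset.mem_univ _, hv⟩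
  have huF : u ∉ F := by
    rw [hF]
    simp only [Finset.mem_filter, Finset.mem_univ, true_and]
    intro hc
    exact h12 (hu ▸ hc).symm
  have hu'F : u' ∉ F := by
    rw [hF]
    simp only [Finset.mem_filter, Finset.mem_univ, true_and]
    intro hc
    exact h13 (hu' ▸ hc).symm
  have hA'F : ∀ w ∈ A', w ∈ F := fun w hw => Finset.mem_of_mem_erase hw
  have huA' : u ∉ A' := fun hc => huF (hA'F u hc)
  have hu'A' : u' ∉ A' := fun hc => hu'F (hA'F u' hc)
  have hvA' : v ∉ A' := Finset.notMem_erase v F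
  have hcardA : A'.card = F.card - 1 := Finset.card_erase_of_mem hvF
  have hFA1 : F.card = A'.card + 1 := by rw [hcardA]; omega
  -- edges
  have hadj_vu : G.Adj v u := (hAdj v u).mpr (by rw [hv, hu]; exact h12)
  have hadj_uu' : G.Adj u u' := (hAdj u u').mpr (by rw [hu, hu']; exact h23)
  set evu : G.edgeSet := ⟨s(v, u), G.mem_edgeSet.mpr hadj_vu⟩ with hevu
  set euu' : G.edgeSet := ⟨s(u, u'), G.mem_edgeSet.mpr hadj_uu'⟩ with heuu'
  have hadj_wu : ∀ w : {x // x ∈ A'}, G.Adj w.1 u := by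
    intro w
    refine (hAdj w.1 u).mpr ?_
    have := (Finset.mem_filter.mp (hA'F w.1 w.2)).2
    rw [this, hu]; exact h12
  set efun : {x // x ∈ A'} → G.edgeSet :=
    (fun w => ⟨s(w.1, u), G.mem_edgeSet.mpr (hadj_wu w)⟩) with hefun
  -- the exponent function on vertices
  set a : V → ℕ := (fun w => if w = u then F.card else if w = u' then 1 else
    if w ∈ A' then 1 else 0) with ha
  have hau : a u = F.card := by rw [ha]; simp
  have hau' : a u' = 1 := by rw [ha]; simp [Ne.symm huu']
  have haA' : ∀ w ∈ A', a w = 1 := by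
    intro w hw
    have h1 : w ≠ u := fun hc => huA' (hc ▸ hw)
    have h2 : w ≠ u' := fun hc => hu'A' (hc ▸ hw)
    rw [ha]; simp [h1, h2, hw]
  have hav : a v = 0 := by rw [ha]; simp [hvu, hvu', hvA']
  have haother : ∀ w, w ≠ u → w ≠ u' → w ∉ A' → a w = 0 := by
    intro w h1 h2 h3; rw [ha]; simp [h1, h2, h3]
  -- the exponent vector of the monomial
  set bm : G.edgeSet →₀ ℕ :=
    Finsupp.single euu' Q + ∑ w ∈ A'.attach, Finsupp.single (efun w) Q with hbm
  -- Dg of bm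
  have hDbm : ∀ w : V, Dg G bm w = (if w ∈ (s(u, u') : Sym2 V) then Q else 0)
      + ∑ w' ∈ A'.attach, (if w ∈ (s(w'.1, u) : Sym2 V) then Q else 0) := by
    intro w
    rw [hbm, Dg_add, Dg_single, Dg_sum]
    exact congrArg _ (Finset.sum_congr rfl fun w' _ => Dg_single G (efun w') Q w)
  have hDbm_u : Dg G bm u = Q + A'.card * Q := by
    rw [hDbm]
    rw [if_pos (Sym2.mem_iff.mpr (Or.inl rfl))]
    congr 1
    rw [Finset.sum_congr rfl (fun w' _ => if_pos (Sym2.mem_iff.mpr (Or.inr rfl))),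
      Finset.sum_const, Finset.card_attach, smul_eq_mul]
  have hDbm_u' : Dg G bm u' = Q := by
    rw [hDbm]
    rw [if_pos (Sym2.mem_iff.mpr (Or.inr rfl))]
    have : ∀ w' : {x // x ∈ A'}, (if u' ∈ (s(w'.1, u) : Sym2 V) then Q else 0) = 0 := by
      intro w'
      rw [if_neg]
      intro hc
      rcases Sym2.mem_iff.mp hc with hc | hc
      · exact hu'A' (hc ▸ w'.2)
      · exact huu' hc.symm
    rw [Finset.sum_congr rfl fun w' _ => this w', Finset.sum_const_zero, add_zero]
  have hDbm_A' : ∀ w ∈ A', Dg G bm w = Q := by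
    intro w hw
    have h1 : w ≠ u := fun hc => huA' (hc ▸ hw)
    have h2 : w ≠ u' := fun hc => hu'A' (hc ▸ hw)
    rw [hDbm]
    rw [if_neg (fun hc => (Sym2.mem_iff.mp hc).elim h1 h2), zero_add]
    have : ∀ w' : {x // x ∈ A'}, (if w ∈ (s(w'.1, u) : Sym2 V) then Q else 0)
        = if w = w'.1 then Q else 0 := by
      intro w'
      congr 1
      rw [Sym2.mem_iff]
      simp [h1]
    rw [Finset.sum_congr rfl fun w' _ => this w']
    rw [Finset.sum_attach A' (fun y => if w = y then Q else 0)]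
    rw [Finset.sum_ite_eq A' w (fun _ => Q), if_pos hw]
  have hDbm_other : ∀ w, w ≠ u → w ≠ u' → w ∉ A' → Dg G bm w = 0 := by
    intro w h1 h2 h3
    rw [hDbm]
    rw [if_neg (fun hc => (Sym2.mem_iff.mp hc).elim h1 h2), zero_add]
    refine Finset.sum_eq_zero fun w' _ => ?_
    rw [if_neg]
    intro hc
    rcases Sym2.mem_iff.mp hc with hc | hc
    · exact h3 (hc ▸ w'.2)
    · exact h1 hc
  have hq1 : Fintype.card K - 1 = Q + 1 := by rw [hQ]; omega
  -- divisibility of a + Dg bm at every vertex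
  have hdvd : ∀ w : V, (Fintype.card K - 1) ∣ (a w + Dg G bm w) := by
    intro w
    rw [hq1]
    by_cases h1 : w = u
    · subst h1
      rw [hau, hDbm_u, hFA1]
      exact ⟨A'.card + 1, by ring⟩
    by_cases h2 : w = u'
    · subst h2
      rw [hau', hDbm_u']
      exact ⟨1, by ring⟩
    by_cases h3 : w ∈ A'
    · rw [haA' w h3, hDbm_A' w h3]
      exact ⟨1, by ring⟩
    · rw [haother w h1 h2 h3, hDbm_other w h1 h2 h3]
      exact dvd_zero _
  -- degree of bm
  have hdegbm : bm.degree = F.card * Q := by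
    rw [degree_eq, hbm]
    have : ∀ e : G.edgeSet,
        (Finsupp.single euu' Q + ∑ w ∈ A'.attach, Finsupp.single (efun w) Q) e
        = Finsupp.single euu' Q e + ∑ w ∈ A'.attach, Finsupp.single (efun w) Q e := by
      intro e
      rw [Finsupp.add_apply, Finset.sum_apply']
    rw [Finset.sum_congr rfl fun e _ => this e, Finset.sum_add_distrib]
    rw [Finset.sum_comm]
    have hs : ∀ (ee : G.edgeSet), ∑ e : G.edgeSet, Finsupp.single ee Q e = Q := by
      intro ee
      simp [Finsupp.single_apply]
    rw [hs euu', Finset.sum_congr rfl fun w _ => hs (efun w), Finset.sum_const,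
      Finset.card_attach, smul_eq_mul, hFA1]
    ring
  -- the goal monomial equals `monomial bm 1`
  have hm : (X euu' ^ Q *
      ∏ w ∈ A'.attach, (X (efun w) : MvPolynomial G.edgeSet K) ^ Q)
      = monomial bm (1 : K) := by
    rw [hbm]
    rw [X_pow_eq_monomial]
    rw [Finset.prod_congr rfl fun w _ =>
      (X_pow_eq_monomial (n := efun w) (e := Q) (R := K))]
    rw [prod_monomial_one G A'.attach (fun w => Finsupp.single (efun w) Q)]
    rw [monomial_mul, one_mul]
  -- the combinatorial key lemma
  have key : ∀ b : G.edgeSet →₀ ℕ, b.degree = F.card * Q → 1 ≤ b evu →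
      ∃ w : V, ¬ (Fintype.card K - 1) ∣ (a w + Dg G b w) := by
    intro b hbdeg hbvu
    by_contra hcon
    push_neg at hcon
    rcases Nat.lt_or_ge (Fintype.card K) 3 with hq3 | hq3
    · have hQ0 : Q = 0 := by rw [hQ]; omega
      have h1 : (1:ℕ) ≤ 0 := by
        calc (1:ℕ) ≤ b evu := hbvu
          _ ≤ b.degree := by
              rw [degree_eq]
              exact Finset.single_le_sum (fun _ _ => Nat.zero_le _) (Finset.mem_univ evu)
          _ = F.card * Q := hbdeg
          _ = 0 := by rw [hQ0, mul_zero]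
      omega
    · -- q ≥ 3
      have hA'deg : ∀ w ∈ A', Q ≤ Dg G b w := by
        intro w hw
        have h1 := hcon w
        rw [haA' w hw] at h1
        have := Nat.le_of_dvd (by omega) h1
        omega
      have hvdeg : Fintype.card K - 1 ≤ Dg G b v := by
        have h1 := hcon v
        rw [hav, zero_add] at h1
        have hpos : 1 ≤ Dg G b v :=
          le_trans hbvu (le_Dg G b evu v (Sym2.mem_iff.mpr (Or.inl rfl)))
        exact Nat.le_of_dvd (by omega) h1
      -- upper bound
      have hub : ∑ w ∈ F, Dg G b w ≤ b.degree := by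
        rw [degree_eq]
        have hswap : ∑ w ∈ F, Dg G b w
            = ∑ e : G.edgeSet, b e * (∑ w ∈ F, if w ∈ (e : Sym2 V) then 1 else 0) := by
          simp only [Dg]
          rw [Finset.sum_comm]
          exact Finset.sum_congr rfl fun e _ => (Finset.mul_sum _ _ _).symm
        rw [hswap]
        refine Finset.sum_le_sum fun e _ => ?_
        have hle1 : (∑ w ∈ F, if w ∈ (e : Sym2 V) then 1 else 0) ≤ 1 := by
          obtain ⟨e, he⟩ := e
          induction e with
          | _ i j =>
            have hpij : p i ≠ p j := (hAdj i j).mp (G.mem_edgeSet.mp he)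
            by_cases hpi : p i = i₁
            · calc (∑ w ∈ F, if w ∈ (s(i,j) : Sym2 V) then 1 else 0)
                  ≤ ∑ w ∈ F, if w = i then 1 else 0 := by
                    refine Finset.sum_le_sum fun w hw => ?_
                    by_cases hmemw : w ∈ (s(i,j) : Sym2 V)
                    · rcases Sym2.mem_iff.mp hmemw with hc | hc
                      · rw [if_pos hmemw, if_pos hc]
                      · exfalso
                        have := (Finset.mem_filter.mp (hF ▸ hw)).2
                        rw [hc] at this
                        exact hpij (hpi.trans this.symm)
                    · rw [if_neg hmemw]; exact Nat.zero_le _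
                _ = if i ∈ F then 1 else 0 := Finset.sum_ite_eq' F i (fun _ => 1)
                _ ≤ 1 := by split <;> omega
            · calc (∑ w ∈ F, if w ∈ (s(i,j) : Sym2 V) then 1 else 0)
                  ≤ ∑ w ∈ F, if w = j then 1 else 0 := by
                    refine Finset.sum_le_sum fun w hw => ?_
                    by_cases hmemw : w ∈ (s(i,j) : Sym2 V)
                    · rcases Sym2.mem_iff.mp hmemw with hc | hc
                      · exfalso
                        have := (Finset.mem_filter.mp (hF ▸ hw)).2
                        rw [hc] at this
                        exact hpi this
                      · rw [if_pos hmemw, if_pos hc]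
                    · rw [if_neg hmemw]; exact Nat.zero_le _
                _ = if j ∈ F then 1 else 0 := Finset.sum_ite_eq' F j (fun _ => 1)
                _ ≤ 1 := by split <;> omega
        calc b e * (∑ w ∈ F, if w ∈ (e : Sym2 V) then 1 else 0) ≤ b e * 1 :=
              Nat.mul_le_mul_left _ hle1
          _ = b e := mul_one _
      -- lower bound
      have hlb : (Fintype.card K - 1) + A'.card * Q ≤ ∑ w ∈ F, Dg G b w := by
        have hFi : F = insert v A' := by rw [hA', Finset.insert_erase hvF]
        rw [hFi, Finset.sum_insert hvA']
        have h2 := Finset.card_nsmul_le_sum A' (fun w => Dg G b w) Q hA'deg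
        rw [smul_eq_mul] at h2
        exact Nat.add_le_add hvdeg h2
      rw [hbdeg, hFA1, add_mul, one_mul] at hub
      have hfin : (Fintype.card K - 1) + A'.card * Q ≤ A'.card * Q + Q :=
        le_trans hlb hub
      rw [hQ] at hfin
      generalize A'.card * (Fintype.card K - 2) = X at hfin
      omega
  -- Lfun of the monomial is nonzero
  have hLm : Lfun G a (F.card * Q) (monomial bm (1:K)) = (-1 : K) ^ (Fintype.card V) := by
    rw [Lfun_monomial, if_pos hdegbm, one_mul]
    have hfac : ∀ w : V, (∑ t : Kˣ, (t : K) ^ (a w + Dg G bm w)) = -1 := by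
      intro w
      rw [sum_units_pow, if_pos (hdvd w)]
    rw [Finset.prod_congr rfl fun w _ => hfac w, Finset.prod_const, Finset.card_univ]
  -- Lfun vanishes on g
  have hLg : Lfun G a (F.card * Q) g = 0 := Lfun_vanishingIdeal G a (F.card * Q) hg
  -- Lfun vanishes on h
  have hLh : Lfun G a (F.card * Q) h = 0 := by
    obtain ⟨s, hs⟩ := Ideal.mem_span_singleton.mp hh
    have hXevu : (X ⟨s(v, u), G.mem_edgeSet.mpr ((hAdj v u).mpr (by rw [hv, hu]; exact h12))⟩ :
        MvPolynomial G.edgeSet K) = X evu := rfl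
    rw [hs, hXevu]
    conv_lhs => rw [s.as_sum, Finset.mul_sum]
    rw [Lfun_sum]
    refine Finset.sum_eq_zero fun b hb => ?_
    have hXmon : (X evu : MvPolynomial G.edgeSet K) * monomial b (coeff b s)
        = monomial (Finsupp.single evu 1 + b) (coeff b s) := by
      rw [monomial_single_add, pow_one]
    rw [hXmon, Lfun_monomial]
    split_ifs with hdeg
    · have hbvu : 1 ≤ (Finsupp.single evu 1 + b : G.edgeSet →₀ ℕ) evu := by
        rw [Finsupp.add_apply, Finsupp.single_eq_same]
        omega
      obtain ⟨w₀, hw₀⟩ := key _ hdeg hbvu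
      rw [Finset.prod_eq_zero (Finset.mem_univ w₀)
        (by rw [sum_units_pow, if_neg hw₀]), mul_zero]
    · rfl
  -- conclude
  have hgh : g + h = monomial bm (1:K) := by
    rw [hsum, ← hm]
  have hzero : (0 : K) = (-1 : K) ^ (Fintype.card V) := by
    calc (0 : K) = Lfun G a (F.card * Q) g + Lfun G a (F.card * Q) h := by
          rw [hLg, hLh, add_zero]
      _ = Lfun G a (F.card * Q) (g + h) := (Lfun_add G a (F.card * Q) g h).symm
      _ = Lfun G a (F.card * Q) (monomial bm (1:K)) := by rw [hgh]
      _ = (-1 : K) ^ (Fintype.card V) := hLm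
  exact pow_ne_zero _ (neg_ne_zero.mpr (one_ne_zero (α := K))) hzero.symm
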